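/- Fix n ≥ 2 and a = (a₁,…,a_n) ∈ ℕⁿ with q = a₁+⋯+a_n, and suppose each a_i divides q. Then the smallest face of the Newton polyhedron 𝓔(a) (generated by L_n(a) = {r ∈ ℕ₀ⁿ\{0} : q | ⟨a,r⟩ and r₁⋯r_n = 0}) meeting the diagonal equals the convex hull of the points (q/a_i)·e_i, i = 1,…,n; in particular it is a compact facet of 𝓔(a). -/

import Mathlib

open Finset

/-- The Newton polyhedron of a set `I ⊆ ℝ₊ⁿ \ {0}`: the boundary of the convex hull
of `⋃_{α ∈ I} (α + ℝ₊ⁿ)`. -/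
noncomputable def newtonPolyhedron (n : ℕ) (I : Set (Fin n → ℝ)) : Set (Fin n → ℝ) :=
  frontier (convexHull ℝ (⋃ α ∈ I, {x : Fin n → ℝ | ∀ i, α i ≤ x i}))

/-- `F` is a face of the polyhedron `E`: cut out on `E` by some polar vector
`a ∈ ℝ₊ⁿ \ {0}` along the infimum value `m(a) = inf_{x ∈ E} ⟨a,x⟩`. -/
def IsFace (n : ℕ) (E F : Set (Fin n → ℝ)) : Prop :=
  ∃ a : Fin n → ℝ, (∀ i, 0 ≤ a i) ∧ a ≠ 0 ∧
    F = {x ∈ E | ∑ i, a i * x i = sInf ((fun x => ∑ i, a i * x i) '' E)}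

/-- `F` meets the diagonal `ℝ₊·𝟏`. -/
def MeetsDiagonal (n : ℕ) (F : Set (Fin n → ℝ)) : Prop :=
  ∃ t : ℝ, 0 < t ∧ (fun _ => t) ∈ F

set_option maxHeartbeats 2000000 in
/-- for `n ≥ 2` and `a ∈ ℕⁿ` with `q = Σ a_i` and each `a_i ∣ q`, the
smallest face of the Newton polyhedron `𝓔(a)` of
`L_n(a) = {r ∈ ℕ₀ⁿ \ {0} : q ∣ ⟨a,r⟩, r₁⋯r_n = 0}` which meets the diagonal equals
`conv{(q/a_i)·e_i : i}`; in particular it is a compact facet (a face of dimension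
`n-1`). -/
theorem stmt10 (n : ℕ) (hn : 2 ≤ n) (a : Fin n → ℕ) (ha : ∀ i, 0 < a i)
    (q : ℕ) (hq : q = ∑ i, a i) (hdvd : ∀ i, a i ∣ q)
    (E F : Set (Fin n → ℝ))
    (hE : E = newtonPolyhedron n ((fun r : Fin n → ℕ => fun i => (r i : ℝ)) ''
      {r : Fin n → ℕ | r ≠ 0 ∧ q ∣ ∑ i, a i * r i ∧ ∃ i, r i = 0}))
    (hF : F = convexHull ℝ
      (Set.range fun i : Fin n => Pi.single i ((q : ℝ) / (a i)))) :
    IsFace n E F ∧ MeetsDiagonal n F ∧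
      (∀ F' : Set (Fin n → ℝ), IsFace n E F' → MeetsDiagonal n F' → F ⊆ F') ∧
      IsCompact F ∧ Module.finrank ℝ ↥(vectorSpan ℝ F) = n - 1 := by
  have hne : Nonempty (Fin n) := ⟨⟨0, by omega⟩⟩
  have hq0 : 0 < q := by
    subst hq
    exact Finset.sum_pos (fun i _ => ha i) Finset.univ_nonempty
  have haR : ∀ i, (0:ℝ) < (a i : ℝ) := fun i => by exact_mod_cast ha i
  have haR0 : ∀ i, (a i : ℝ) ≠ 0 := fun i => (haR i).ne'
  have hqR : (0:ℝ) < (q:ℝ) := by exact_mod_cast hq0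
  set v : Fin n → (Fin n → ℝ) := fun i => Pi.single i ((q:ℝ)/(a i)) with hvdef
  set f : (Fin n → ℝ) → ℝ := fun x => ∑ i, (a i : ℝ) * x i with hfdef
  set K : Set (Fin n → ℝ) := {x | (∀ i, 0 ≤ x i) ∧ (q:ℝ) ≤ f x} with hKdef
  have hvij : ∀ i j, v i j = if j = i then (q:ℝ)/(a i) else 0 := by
    intro i j; simp [hvdef, Pi.single_apply]
  have hsum_single : ∀ (i : Fin n) (c : ℝ), (∑ j, (a j : ℝ) * (Pi.single i c : Fin n → ℝ) j)
      = (a i : ℝ) * c := by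
    intro i c
    rw [Finset.sum_eq_single i]
    · simp
    · intro b _ hb; simp [Pi.single_apply, hb]
    · simp
  have hfv : ∀ i, f (v i) = q := by
    intro i
    rw [hvdef, hfdef]
    simp only
    rw [hsum_single]
    rw [mul_comm, div_mul_cancel₀ _ (haR0 i)]
  have hv0 : ∀ i j, (0:ℝ) ≤ v i j := by
    intro i j; rw [hvij]
    split
    · positivity
    · exact le_refl 0
  -- explicit convex combination: any nonneg point on the hyperplane is in conv (range v)
  have hconv : ∀ x : Fin n → ℝ, (∀ i, 0 ≤ x i) → f x = q → x ∈ convexHull ℝ (Set.range v) := by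
    intro x hx hfx
    set w : Fin n → ℝ := fun i => (a i : ℝ) * x i / q with hwdef
    have hw0 : ∀ i ∈ Finset.univ, 0 ≤ w i := fun i _ => by
      have := hx i; positivity
    have hwsum : ∑ i, w i = 1 := by
      rw [hwdef, ← Finset.sum_div, div_eq_one_iff_eq hqR.ne']
      exact hfx
    have hmem := Finset.centerMass_mem_convexHull (Finset.univ) hw0
      (by rw [hwsum]; norm_num) (fun i _ => Set.mem_range_self (f := v) i)
    have : Finset.univ.centerMass w v = x := by
      rw [Finset.centerMass_eq_of_sum_1 _ _ hwsum]
      funext j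
      rw [Finset.sum_apply]
      have : ∀ i, (w i • v i) j = w i * v i j := fun i => rfl
      simp_rw [this]
      rw [Finset.sum_eq_single j]
      · rw [hvij]; simp only [if_pos rfl, ↓reduceIte]
        have hj := haR0 j
        rw [hwdef, div_mul_eq_mul_div, div_eq_iff hqR.ne']
        field_simp
      · intro b _ hb; rw [hvij]; simp [Ne.symm hb]
      · simp
    rwa [this] at hmem
  -- conv (range v) is inside the nonneg hyperplane slice
  have hconv2 : convexHull ℝ (Set.range v) ⊆ {x | (∀ i, 0 ≤ x i) ∧ f x = q} := by
    apply convexHull_min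
    · rintro _ ⟨i, rfl⟩
      exact ⟨hv0 i, hfv i⟩
    · rintro x ⟨hx0, hxf⟩ y ⟨hy0, hyf⟩ s t hs ht hst
      constructor
      · intro i
        have := hx0 i; have := hy0 i
        simp only [Pi.add_apply, Pi.smul_apply, smul_eq_mul]
        positivity
      · simp only [hfdef, Pi.add_apply, Pi.smul_apply, smul_eq_mul]
        simp only [mul_add, Finset.sum_add_distrib]
        have e1 : ∑ i, (a i:ℝ) * (s * x i) = s * f x := by
          rw [hfdef, Finset.mul_sum]; exact Finset.sum_congr rfl (fun i _ => by ring)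
        have e2 : ∑ i, (a i:ℝ) * (t * y i) = t * f y := by
          rw [hfdef, Finset.mul_sum]; exact Finset.sum_congr rfl (fun i _ => by ring)
        rw [e1, e2, hxf, hyf]
        nlinarith [hst]
  -- the generating set and the polyhedron
  set I : Set (Fin n → ℝ) := ((fun r : Fin n → ℕ => fun i => (r i : ℝ)) ''
      {r : Fin n → ℕ | r ≠ 0 ∧ q ∣ ∑ i, a i * r i ∧ ∃ i, r i = 0}) with hIdef
  set G : Set (Fin n → ℝ) := ⋃ α ∈ I, {x : Fin n → ℝ | ∀ i, α i ≤ x i} with hGdef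
  have hKconv : Convex ℝ K := by
    rintro x ⟨hx0, hxf⟩ y ⟨hy0, hyf⟩ s t hs ht hst
    constructor
    · intro i
      have := hx0 i; have := hy0 i
      simp only [Pi.add_apply, Pi.smul_apply, smul_eq_mul]
      positivity
    · show (q:ℝ) ≤ f (s • x + t • y)
      have heq : f (s • x + t • y) = s * f x + t * f y := by
        simp only [hfdef, Pi.add_apply, Pi.smul_apply, smul_eq_mul, mul_add,
          Finset.sum_add_distrib, Finset.mul_sum]
        congr 1 <;> exact Finset.sum_congr rfl (fun i _ => by ring)
      rw [heq]
      nlinarith [hxf, hyf]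
  have hGsub : G ⊆ K := by
    rw [hGdef]
    intro x hx
    simp only [Set.mem_iUnion, exists_prop] at hx
    obtain ⟨α, hαI, hαx⟩ := hx
    obtain ⟨r, ⟨hr0, hrdvd, -⟩, rfl⟩ := hαI
    have hα0 : ∀ i, (0:ℝ) ≤ (r i : ℝ) := fun i => Nat.cast_nonneg _
    refine ⟨fun i => le_trans (hα0 i) (hαx i), ?_⟩
    have hex : ∃ i, r i ≠ 0 := Function.ne_iff.mp hr0
    obtain ⟨i1, hi1⟩ := hex
    have hsum_pos : q ≤ ∑ i, a i * r i := by
      refine Nat.le_of_dvd ?_ hrdvd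
      exact Finset.sum_pos' (fun i _ => Nat.zero_le _)
        ⟨i1, Finset.mem_univ _, Nat.mul_pos (ha i1) (Nat.pos_of_ne_zero hi1)⟩
    have h1 : (q:ℝ) ≤ ∑ i, (a i:ℝ) * (r i : ℝ) := by exact_mod_cast hsum_pos
    exact le_trans h1 (Finset.sum_le_sum (fun i _ =>
      mul_le_mul_of_nonneg_left (hαx i) (haR i).le))
  have hnt : Nontrivial (Fin n) := Fin.nontrivial_iff_two_le.mpr hn
  have hvI : ∀ i : Fin n, v i ∈ I := by
    intro i
    refine ⟨Pi.single i (q / a i), ⟨?_, ?_, ?_⟩, ?_⟩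
    · intro h
      have hqa : 0 < q / a i := Nat.div_pos (Nat.le_of_dvd hq0 (hdvd i)) (ha i)
      have := congrFun h i
      simp only [Pi.single_eq_same, Pi.zero_apply] at this
      omega
    · have hsum : ∑ j, a j * (Pi.single i (q / a i) : Fin n → ℕ) j = q := by
        rw [Finset.sum_eq_single i]
        · simp [Nat.mul_div_cancel' (hdvd i)]
        · intro b _ hb; simp [Pi.single_apply, hb]
        · simp
      rw [hsum]
    · obtain ⟨j, hj⟩ := exists_ne i
      exact ⟨j, by simp [Pi.single_apply, hj]⟩
    · funext j
      show ((Pi.single i (q / a i) : Fin n → ℕ) j : ℝ) = v i j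
      rw [hvij, Pi.single_apply, apply_ite (Nat.cast : ℕ → ℝ),
        Nat.cast_div (hdvd i) (by exact_mod_cast (ha i).ne'), Nat.cast_zero]
  have hKsubP : K ⊆ convexHull ℝ G := by
    rintro x ⟨hx0, hxf⟩
    set S : ℝ := f x with hSdef
    have hS0 : (0:ℝ) < S := lt_of_lt_of_le hqR hxf
    set w : Fin n → ℝ := fun i => (a i : ℝ) * x i / S with hwdef
    set c : Fin n → ℝ := fun j => x j - ((q:ℝ) / S) * x j with hcdef
    have hc0 : ∀ j, 0 ≤ c j := by
      intro j
      have h1 : (q:ℝ)/S ≤ 1 := (div_le_one hS0).mpr hxf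
      have := hx0 j
      simp only [hcdef]
      nlinarith
    have hw0 : ∀ i ∈ Finset.univ, 0 ≤ w i := fun i _ => by
      have := hx0 i
      have := hS0
      positivity
    have hwsum : ∑ i, w i = 1 := by
      rw [hwdef, ← Finset.sum_div, div_eq_one_iff_eq hS0.ne']
    set z : Fin n → (Fin n → ℝ) := fun i => fun j => v i j + c j with hzdef
    have hzG : ∀ i, z i ∈ G := by
      intro i
      rw [hGdef]
      refine Set.mem_biUnion (hvI i) ?_
      intro k
      show v i k ≤ v i k + c k
      linarith [hc0 k]
    have hmem := Finset.centerMass_mem_convexHull (Finset.univ) hw0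
      (by rw [hwsum]; norm_num) (fun i _ => hzG i)
    have hcm : Finset.univ.centerMass w z = x := by
      rw [Finset.centerMass_eq_of_sum_1 _ _ hwsum]
      funext j
      rw [Finset.sum_apply]
      have he : ∀ i, (w i • z i) j = w i * v i j + w i * c j := fun i => by
        show w i * (v i j + c j) = _
        ring
      simp_rw [he]
      rw [Finset.sum_add_distrib, ← Finset.sum_mul, hwsum, one_mul]
      have hterm : ∑ i, w i * v i j = ((q:ℝ) / S) * x j := by
        rw [Finset.sum_eq_single j]
        · rw [hvij]
          simp only [if_pos rfl, ↓reduceIte]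
          rw [hwdef]
          have hj := haR0 j
          have hS := hS0.ne'
          field_simp
        · intro b _ hb; rw [hvij]; simp [Ne.symm hb]
        · simp
      rw [hterm, hcdef]
      ring
    rwa [hcm] at hmem
  have hPeq : convexHull ℝ G = K :=
    Set.Subset.antisymm (convexHull_min hGsub hKconv) hKsubP
  have hEK : E = frontier K := by
    rw [hE]
    unfold newtonPolyhedron
    rw [← hGdef, hPeq]
  have hfcont : Continuous f := by
    rw [hfdef]
    exact continuous_finset_sum _ (fun i _ => continuous_const.mul (continuous_apply i))
  have hKclosed : IsClosed K := by
    have h1 : IsClosed {x : Fin n → ℝ | ∀ i, 0 ≤ x i} := by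
      have he : {x : Fin n → ℝ | ∀ i, 0 ≤ x i} = ⋂ i, {x | 0 ≤ x i} := by ext x; simp
      rw [he]
      exact isClosed_iInter (fun i => isClosed_le continuous_const (continuous_apply i))
    have h2 : IsClosed {x : Fin n → ℝ | (q:ℝ) ≤ f x} :=
      isClosed_le continuous_const hfcont
    exact h1.inter h2
  have hUint : {x : Fin n → ℝ | (∀ i, 0 < x i) ∧ (q:ℝ) < f x} ⊆ interior K := by
    have h1 : IsOpen {x : Fin n → ℝ | ∀ i, 0 < x i} := by
      have he : {x : Fin n → ℝ | ∀ i, 0 < x i} = ⋂ i, {x | 0 < x i} := by ext x; simp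
      rw [he]
      exact isOpen_iInter_of_finite (fun i => isOpen_lt continuous_const (continuous_apply i))
    have h2 : IsOpen {x : Fin n → ℝ | (q:ℝ) < f x} :=
      isOpen_lt continuous_const hfcont
    exact interior_maximal (fun x hx => ⟨fun i => (hx.1 i).le, (hx.2).le⟩) (h1.inter h2)
  have hnotint : ∀ x : Fin n → ℝ, f x = q → x ∉ interior K := by
    intro x hfx hx
    rw [mem_interior_iff_mem_nhds, Metric.mem_nhds_iff] at hx
    obtain ⟨ε, hε, hball⟩ := hx
    set i0 : Fin n := ⟨0, by omega⟩ with hi0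
    set p : Fin n → ℝ := Pi.single i0 (1:ℝ) with hpdef
    have hp0 : ∀ b, 0 ≤ p b := by
      intro b; rw [hpdef, Pi.single_apply]; split <;> norm_num
    have hp1 : ∀ b, p b ≤ 1 := by
      intro b; rw [hpdef, Pi.single_apply]; split <;> norm_num
    set y : Fin n → ℝ := fun j => x j - (ε/2) * p j with hydef
    have hy : y ∈ Metric.ball x ε := by
      rw [Metric.mem_ball, dist_pi_lt_iff hε]
      intro b
      have hyb : y b - x b = -((ε/2) * p b) := by
        show (x b - (ε/2) * p b) - x b = _
        ring
      rw [Real.dist_eq, hyb, abs_neg, abs_of_nonneg (mul_nonneg (by positivity) (hp0 b))]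
      nlinarith [hp0 b, hp1 b]
    have hfyd : f y = ∑ j, (a j:ℝ) * y j := rfl
    have hfxd : f x = ∑ j, (a j:ℝ) * x j := rfl
    have hfy : f y = f x - (ε/2) * (a i0 : ℝ) := by
      rw [hfyd, hfxd]
      have h1 : ∀ j, (a j:ℝ) * y j = (a j:ℝ) * x j - (ε/2) * ((a j:ℝ) * p j) := by
        intro j
        show (a j:ℝ) * (x j - (ε/2) * p j) = _
        ring
      calc ∑ j, (a j:ℝ) * y j
          = ∑ j, ((a j:ℝ) * x j - (ε/2) * ((a j:ℝ) * p j)) :=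
            Finset.sum_congr rfl (fun j _ => h1 j)
        _ = (∑ j, (a j:ℝ) * x j) - (ε/2) * ∑ j, (a j:ℝ) * p j := by
            rw [Finset.sum_sub_distrib, Finset.mul_sum]
        _ = (∑ j, (a j:ℝ) * x j) - (ε/2) * ((a i0:ℝ) * 1) := by
            rw [hpdef, hsum_single]
        _ = (∑ j, (a j:ℝ) * x j) - (ε/2) * (a i0:ℝ) := by ring
    have hqle : (q:ℝ) ≤ f y := (hball hy).2
    have := haR i0
    rw [hfy, hfx] at hqle
    nlinarith
  have hEsubK : E ⊆ K := by
    rw [hEK]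
    intro x hx
    have h1 := frontier_subset_closure hx
    rwa [hKclosed.closure_eq] at h1
  have hFE : convexHull ℝ (Set.range v) ⊆ E := by
    rw [hEK]
    intro x hx
    obtain ⟨hx0, hxf⟩ := hconv2 hx
    show x ∈ closure K \ interior K
    exact ⟨subset_closure ⟨hx0, le_of_eq hxf.symm⟩, hnotint x hxf⟩
  have hvE : ∀ i, v i ∈ E := fun i => hFE (subset_convexHull ℝ _ (Set.mem_range_self i))
  have i0 : Fin n := ⟨0, by omega⟩
  have hinf : sInf ((fun x => ∑ i, (a i:ℝ) * x i) '' E) = q := by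
    have himg : (fun x => ∑ i, (a i:ℝ) * x i) '' E = f '' E := rfl
    rw [himg]
    apply le_antisymm
    · refine csInf_le ⟨(q:ℝ), ?_⟩ ⟨v i0, hvE _, hfv _⟩
      rintro y ⟨x, hxE, rfl⟩
      exact (hEsubK hxE).2
    · refine le_csInf ⟨(q:ℝ), ⟨v i0, hvE _, hfv _⟩⟩ ?_
      rintro y ⟨x, hxE, rfl⟩
      exact (hEsubK hxE).2
  have hFface : IsFace n E F := by
    refine ⟨fun i => (a i : ℝ), fun i => (haR i).le, ?_, ?_⟩
    · intro h
      exact (haR0 i0) (congrFun h i0)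
    · rw [hinf, hF]
      ext x
      simp only [Set.mem_setOf_eq]
      constructor
      · intro hx
        obtain ⟨hx0, hxf⟩ := hconv2 hx
        exact ⟨hFE hx, hxf⟩
      · rintro ⟨hxE, hxf⟩
        exact hconv x (fun i => (hEsubK hxE).1 i) hxf
  have hdiagF : MeetsDiagonal n F := by
    refine ⟨1, one_pos, ?_⟩
    rw [hF]
    apply hconv
    · intro i; norm_num
    · show ∑ i, (a i:ℝ) * (1:ℝ) = (q:ℝ)
      simp only [mul_one]
      rw [hq]
      push_cast
      rfl
  have hmin : ∀ F' : Set (Fin n → ℝ), IsFace n E F' → MeetsDiagonal n F' → F ⊆ F' := by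
    rintro F' ⟨b, hb0, hbne, hF'⟩ ⟨t, ht, htF'⟩
    set g : (Fin n → ℝ) → ℝ := fun x => ∑ i, b i * x i with hgdef
    set m : ℝ := sInf (g '' E) with hmdef
    have hbdd : BddBelow (g '' E) := by
      refine ⟨0, ?_⟩
      rintro y ⟨x, hxE, rfl⟩
      exact Finset.sum_nonneg (fun i _ => mul_nonneg (hb0 i) ((hEsubK hxE).1 i))
    have hmle : ∀ x ∈ E, m ≤ g x := fun x hx => csInf_le hbdd ⟨x, hx, rfl⟩
    rw [hF'] at htF'
    obtain ⟨htE, htm⟩ := htF'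
    have ht1 : t = 1 := by
      have hKt : (fun _ : Fin n => t) ∈ K := hEsubK htE
      have hft : f (fun _ : Fin n => t) = t * q := by
        show ∑ i, (a i:ℝ) * t = t * q
        rw [← Finset.sum_mul, hq]
        push_cast
        ring
      have h2 : (q:ℝ) ≤ t * q := by
        have := hKt.2
        rwa [hft] at this
      have ht1' : (1:ℝ) ≤ t := by nlinarith
      by_contra hne1
      have htlt : 1 < t := lt_of_le_of_ne ht1' (Ne.symm hne1)
      have hint : (fun _ : Fin n => t) ∈ interior K := by
        apply hUint
        refine ⟨fun i => ht, ?_⟩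
        rw [hft]
        nlinarith
      rw [hEK] at htE
      exact htE.2 hint
    have hm : m = ∑ i, b i := by
      rw [← htm]
      simp only [ht1, mul_one]
    have hpair : ∀ i j : Fin n, i ≠ j → b i * (a j:ℝ) ≤ (a i:ℝ) * b j := by
      intro i j hij
      set sj : Fin n → ℝ := Pi.single j (1:ℝ) with hsjdef
      set si : Fin n → ℝ := Pi.single i (1:ℝ) with hsidef
      set x : Fin n → ℝ := fun k => 1 + ((a i:ℝ)/(a j:ℝ)) * sj k - si k with hxdef
      have hsj : ∀ k, sj k = if k = j then (1:ℝ) else 0 := fun k => Pi.single_apply _ _ _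
      have hsi : ∀ k, si k = if k = i then (1:ℝ) else 0 := fun k => Pi.single_apply _ _ _
      have hx0 : ∀ k, 0 ≤ x k := by
        intro k
        show 0 ≤ 1 + ((a i:ℝ)/(a j:ℝ)) * sj k - si k
        rw [hsj, hsi]
        by_cases hki : k = i
        · rw [if_pos hki, if_neg (by rw [hki]; exact hij)]
          norm_num
        · rw [if_neg hki]
          have h1 : (0:ℝ) ≤ (a i:ℝ)/(a j:ℝ) := by positivity
          split <;> nlinarith
      have hsum_aux : ∀ (u : Fin n) (p : Fin n → ℝ), (∀ k, p k = if k = u then (1:ℝ) else 0) →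
          ∑ k, (a k:ℝ) * p k = (a u:ℝ) := by
        intro u p hp
        rw [Finset.sum_eq_single u]
        · rw [hp]; simp
        · intro c _ hc; rw [hp]; simp [hc]
        · simp
      have hfx : f x = q := by
        show ∑ k, (a k:ℝ) * x k = (q:ℝ)
        have h1 : ∀ k, (a k:ℝ) * x k
            = (a k:ℝ) + ((a i:ℝ)/(a j:ℝ)) * ((a k:ℝ) * sj k) - (a k:ℝ) * si k := by
          intro k
          show (a k:ℝ) * (1 + ((a i:ℝ)/(a j:ℝ)) * sj k - si k) = _
          ring
        calc ∑ k, (a k:ℝ) * x k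
            = ∑ k, ((a k:ℝ) + ((a i:ℝ)/(a j:ℝ)) * ((a k:ℝ) * sj k) - (a k:ℝ) * si k) :=
              Finset.sum_congr rfl (fun k _ => h1 k)
          _ = (∑ k, (a k:ℝ)) + ((a i:ℝ)/(a j:ℝ)) * (∑ k, (a k:ℝ) * sj k)
              - ∑ k, (a k:ℝ) * si k := by
              rw [Finset.sum_sub_distrib, Finset.sum_add_distrib, Finset.mul_sum]
          _ = (∑ k, (a k:ℝ)) + ((a i:ℝ)/(a j:ℝ)) * (a j:ℝ) - (a i:ℝ) := by
              rw [hsum_aux j sj hsj, hsum_aux i si hsi]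
          _ = (q:ℝ) := by
              rw [div_mul_cancel₀ _ (haR0 j), hq]
              push_cast
              ring
      have hxE : x ∈ E := hFE (hconv x hx0 hfx)
      have hgx : g x = (∑ k, b k) + ((a i:ℝ)/(a j:ℝ)) * b j - b i := by
        show ∑ k, b k * x k = _
        have h1 : ∀ k, b k * x k
            = b k + ((a i:ℝ)/(a j:ℝ)) * (b k * sj k) - b k * si k := by
          intro k
          show b k * (1 + ((a i:ℝ)/(a j:ℝ)) * sj k - si k) = _
          ring
        have hbj : ∑ k, b k * sj k = b j := by
          rw [Finset.sum_eq_single j]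
          · rw [hsj]; simp
          · intro c _ hc; rw [hsj]; simp [hc]
          · simp
        have hbi : ∑ k, b k * si k = b i := by
          rw [Finset.sum_eq_single i]
          · rw [hsi]; simp
          · intro c _ hc; rw [hsi]; simp [hc]
          · simp
        calc ∑ k, b k * x k
            = ∑ k, (b k + ((a i:ℝ)/(a j:ℝ)) * (b k * sj k) - b k * si k) :=
              Finset.sum_congr rfl (fun k _ => h1 k)
          _ = (∑ k, b k) + ((a i:ℝ)/(a j:ℝ)) * (∑ k, b k * sj k) - ∑ k, b k * si k := by
              rw [Finset.sum_sub_distrib, Finset.sum_add_distrib, Finset.mul_sum]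
          _ = _ := by rw [hbj, hbi]
      have h2 := hmle x hxE
      rw [hgx, hm] at h2
      have h3 : b i ≤ ((a i:ℝ)/(a j:ℝ)) * b j := by linarith
      rw [div_mul_eq_mul_div, le_div_iff₀ (haR j)] at h3
      linarith
    have hpair' : ∀ i j : Fin n, b i * (a j:ℝ) = (a i:ℝ) * b j := by
      intro i j
      rcases eq_or_ne i j with rfl | hij
      · ring
      · have h1 := hpair i j hij
        have h2 := hpair j i (Ne.symm hij)
        linarith
    obtain ⟨j0, hj0⟩ := Function.ne_iff.mp hbne
    have hbk : ∀ k, b k = (b j0 / (a j0:ℝ)) * (a k:ℝ) := by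
      intro k
      rw [div_mul_eq_mul_div, eq_div_iff (haR0 j0)]
      linarith [hpair' k j0]
    have hsumb : ∑ k, b k = (b j0 / (a j0:ℝ)) * q := by
      calc ∑ k, b k = ∑ k, (b j0 / (a j0:ℝ)) * (a k:ℝ) :=
            Finset.sum_congr rfl (fun k _ => hbk k)
        _ = (b j0 / (a j0:ℝ)) * ∑ k, (a k:ℝ) := by rw [Finset.mul_sum]
        _ = (b j0 / (a j0:ℝ)) * q := by
            rw [hq]
            push_cast
            ring
    intro x hxF
    rw [hF] at hxF
    obtain ⟨hx0, hxf⟩ := hconv2 hxF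
    rw [hF']
    refine ⟨hFE hxF, ?_⟩
    show g x = m
    calc g x = ∑ k, b k * x k := rfl
      _ = (b j0 / (a j0:ℝ)) * ∑ k, (a k:ℝ) * x k := by
          rw [Finset.mul_sum]
          exact Finset.sum_congr rfl (fun k _ => by rw [hbk k]; ring)
      _ = (b j0 / (a j0:ℝ)) * q := by
          rw [show (∑ k, (a k:ℝ) * x k) = f x from rfl, hxf]
      _ = m := by rw [hm, hsumb]
  have hcomp : IsCompact F := by
    rw [hF]
    exact (Set.finite_range _).isCompact_convexHull (𝕜 := ℝ)
  have hrank : Module.finrank ℝ ↥(vectorSpan ℝ F) = n - 1 := by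
    rw [hF, ← direction_affineSpan, affineSpan_convexHull, direction_affineSpan]
    have hai : AffineIndependent ℝ v := by
      rw [affineIndependent_iff]
      intro s w hw hsum i hi
      have h1 := congrFun hsum i
      rw [Finset.sum_apply] at h1
      have h2 : ∀ e ∈ s, e ≠ i → (w e • v e) i = 0 := by
        intro e _ he
        show w e * v e i = 0
        rw [hvij, if_neg (Ne.symm he), mul_zero]
      rw [Finset.sum_eq_single_of_mem i hi h2] at h1
      have h3 : (w i • v i) i = w i * ((q:ℝ)/(a i)) := by
        show w i * v i i = _
        rw [hvij, if_pos rfl]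
      rw [h3] at h1
      have h4 : (q:ℝ)/(a i) ≠ 0 := ne_of_gt (div_pos hqR (haR i))
      simpa [h4] using h1
    have hcard : Fintype.card (Fin n) = (n - 1) + 1 := by
      rw [Fintype.card_fin]
      omega
    exact hai.finrank_vectorSpan hcard
  exact ⟨hFface, hdiagF, hmin, hcomp, hrank⟩
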